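/- Let Φ : [0,∞) → [0,∞) be decreasing with Φ(r) ≤ C r^{-q} for all r > 0, where q > p and C > 0. Let x_1, ..., x_n ∈ ℝ^p be δ-separated (‖x_i - x_j‖ ≥ δ for i ≠ j). Then there is a constant C_p depending only on p, q, C such that for every i and every bandwidth σ > 0, Σ_{j ≠ i} Φ(‖x_i - x_j‖/σ) ≤ C_p (σ/δ)^q. -/

import Mathlib

open MeasureTheory ENNReal

lemma pack_lemma (p : ℕ) {n : ℕ} (x : Fin n → EuclideanSpace ℝ (Fin p)) {δ : ℝ} (hδ : 0 < δ)
    (hsep : ∀ i j, i ≠ j → δ ≤ dist (x i) (x j)) (i : Fin n) {r : ℝ} (hr : 0 ≤ r) :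
    (((Finset.univ.filter fun j => dist (x i) (x j) ≤ r)).card : ℝ) ≤ (2 * r / δ + 1) ^ p := by
  set s := Finset.univ.filter fun j => dist (x i) (x j) ≤ r with hs
  rcases Nat.eq_zero_or_pos p with hp | hp
  · subst hp
    have hsub : Subsingleton (EuclideanSpace ℝ (Fin 0)) := by
      constructor; intro a b; ext k; exact absurd k.2 (by simp)
    have hcard : s.card ≤ 1 := by
      rw [Finset.card_le_one]
      intro a ha b hb
      by_contra hab
      have := hsep a b hab
      have : dist (x a) (x b) = 0 := by
        rw [hsub.elim (x a) (x b)]; simp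
      linarith [hsep a b hab]
    calc (s.card : ℝ) ≤ 1 := by exact_mod_cast hcard
    _ = (2 * r / δ + 1) ^ 0 := by simp
  haveI : Nonempty (Fin p) := Fin.pos_iff_nonempty.mp hp
  -- disjoint balls
  have hdisj : (↑s : Set (Fin n)).Pairwise (Function.onFun Disjoint fun j => Metric.ball (x j) (δ / 2)) := by
    intro a _ b _ hab
    exact Metric.ball_disjoint_ball (by linarith [hsep a b hab])
  have hmeas : ∀ j ∈ s, MeasurableSet (Metric.ball (x j) (δ / 2)) := fun j _ =>
    Metric.isOpen_ball.measurableSet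
  have hsum : ∑ j ∈ s, volume (Metric.ball (x j) (δ / 2)) =
      volume (⋃ j ∈ s, Metric.ball (x j) (δ / 2)) :=
    (measure_biUnion_finset hdisj hmeas).symm
  have hsubset : (⋃ j ∈ s, Metric.ball (x j) (δ / 2)) ⊆ Metric.ball (x i) (r + δ / 2) := by
    refine Set.iUnion₂_subset fun j hj => Metric.ball_subset_ball' ?_
    have : dist (x i) (x j) ≤ r := by simpa [hs] using hj
    rw [dist_comm] at this
    linarith
  have hle : ∑ j ∈ s, volume (Metric.ball (x j) (δ / 2)) ≤
      volume (Metric.ball (x i) (r + δ / 2)) := hsum ▸ measure_mono hsubset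
  simp only [EuclideanSpace.volume_ball, Fintype.card_fin] at hle
  rw [Finset.sum_const] at hle
  set c := ENNReal.ofReal (Real.sqrt Real.pi ^ p / Real.Gamma (p / 2 + 1)) with hc
  have hc0 : c ≠ 0 := by
    rw [hc, ne_eq, ENNReal.ofReal_eq_zero, not_le]
    exact div_pos (pow_pos (Real.sqrt_pos.mpr Real.pi_pos) p)
      (Real.Gamma_pos_of_pos (by positivity))
  have hctop : c ≠ ⊤ := ENNReal.ofReal_ne_top
  rw [nsmul_eq_mul, ← mul_assoc] at hle
  have hle2 : (s.card : ℝ≥0∞) * ENNReal.ofReal (δ / 2) ^ p ≤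
      ENNReal.ofReal (r + δ / 2) ^ p :=
    (ENNReal.mul_le_mul_iff_left hc0 hctop).mp hle
  have hδ2 : (0:ℝ) ≤ δ / 2 := by linarith
  have hr2 : (0:ℝ) ≤ r + δ / 2 := by linarith
  rw [← ENNReal.ofReal_pow hδ2, ← ENNReal.ofReal_pow hr2, ← ENNReal.ofReal_natCast,
    ← ENNReal.ofReal_mul (by positivity)] at hle2
  have hle3 : (s.card : ℝ) * (δ / 2) ^ p ≤ (r + δ / 2) ^ p :=
    (ENNReal.ofReal_le_ofReal_iff (by positivity)).mp hle2
  have hpos : (0:ℝ) < (δ / 2) ^ p := by positivity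
  have : (s.card : ℝ) ≤ (r + δ / 2) ^ p / (δ / 2) ^ p := by
    rw [le_div_iff₀ hpos]; exact hle3
  calc (s.card : ℝ) ≤ (r + δ / 2) ^ p / (δ / 2) ^ p := this
    _ = ((r + δ / 2) / (δ / 2)) ^ p := (div_pow _ _ _).symm
    _ = (2 * r / δ + 1) ^ p := by
        congr 1
        field_simp

/-- Off-diagonal kernel sum bound: there is a constant `Cp = Cp(p, q, C)` such that
for any decreasing radial profile `Φ : [0,∞) → [0,∞)` with `Φ(r) ≤ C r^{-q}` (`q > p`),
any `δ`-separated points `x_1, …, x_n ∈ ℝ^p`, any `i`, and any bandwidth `σ > 0`,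
`Σ_{j ≠ i} Φ(‖x_i - x_j‖/σ) ≤ Cp (σ/δ)^q`. -/
theorem stmt5 (p : ℕ) (q C : ℝ) (hq : (p : ℝ) < q) (hC : 0 < C) :
    ∃ Cp > (0 : ℝ), ∀ (Φ : ℝ → ℝ), (∀ r, 0 ≤ Φ r) → AntitoneOn Φ (Set.Ici 0) →
      (∀ r > (0 : ℝ), Φ r ≤ C * r ^ (-q)) →
      ∀ (n : ℕ) (x : Fin n → EuclideanSpace ℝ (Fin p)) (δ : ℝ), 0 < δ →
        (∀ i j, i ≠ j → δ ≤ dist (x i) (x j)) →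
        ∀ (i : Fin n) (σ : ℝ), 0 < σ →
          ∑ j ∈ Finset.univ.erase i, Φ (dist (x i) (x j) / σ) ≤ Cp * (σ / δ) ^ q := by
  classical
  set r : ℝ := (2:ℝ) ^ ((p:ℝ) - q) with hrdef
  have hr0 : 0 < r := Real.rpow_pos_of_pos two_pos _
  have hr1 : r < 1 := Real.rpow_lt_one_of_one_lt_of_neg one_lt_two (by linarith)
  have h1r : 0 < 1 - r := by linarith
  refine ⟨C * (2:ℝ) ^ (3 * (p:ℝ)) * (1 - r)⁻¹,
    by positivity, ?_⟩
  intro Φ hΦ0 hΦanti hΦle n x δ hδ hsep i σ hσ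
  set t := Finset.univ.erase i with ht
  have hdist : ∀ j ∈ t, δ ≤ dist (x i) (x j) := by
    intro j hj
    exact hsep i j fun h => (Finset.mem_erase.mp hj).1 h.symm
  -- choose M bounding all distances
  obtain ⟨M, hM⟩ : ∃ M : ℕ, ∀ j ∈ t, dist (x i) (x j) < 2 ^ (M + 1) * δ := by
    obtain ⟨D, hD⟩ := Finset.exists_le (t.image fun j => dist (x i) (x j))
    obtain ⟨M, hM⟩ := exists_nat_gt (D / δ)
    refine ⟨M, fun j hj => ?_⟩
    have h1 : dist (x i) (x j) ≤ D := hD _ (Finset.mem_image_of_mem _ hj)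
    have h2 : D < M * δ := by
      have := (div_lt_iff₀ hδ).mp hM
      linarith
    have h3 : (M:ℝ) ≤ 2 ^ (M + 1) := by
      calc (M:ℝ) ≤ 2 ^ M := by exact_mod_cast (Nat.lt_two_pow_self (n := M)).le
      _ ≤ 2 ^ (M + 1) := by
          apply pow_le_pow_right₀ (by norm_num) (by omega)
    nlinarith
  set g : Fin n → ℕ → ℝ := fun j k =>
    if dist (x i) (x j) < 2 ^ (k + 1) * δ then ((2:ℝ) ^ k * δ) ^ (-q) else 0 with hg
  have hgnn : ∀ j k, 0 ≤ g j k := by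
    intro j k
    simp only [hg]
    split
    · positivity
    · exact le_refl 0
  -- per-term bound
  have key : ∀ j ∈ t, Φ (dist (x i) (x j) / σ) ≤
      C * σ ^ q * ∑ k ∈ Finset.range (M + 1), g j k := by
    intro j hj
    have hd : δ ≤ dist (x i) (x j) := hdist j hj
    have hd0 : (0:ℝ) < dist (x i) (x j) := lt_of_lt_of_le hδ hd
    have h1 : Φ (dist (x i) (x j) / σ) ≤ C * (dist (x i) (x j) / σ) ^ (-q) :=
      hΦle _ (by positivity)
    have h2 : (dist (x i) (x j) / σ) ^ (-q) = σ ^ q * dist (x i) (x j) ^ (-q) := by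
      rw [Real.div_rpow hd0.le hσ.le, Real.rpow_neg hσ.le, div_eq_mul_inv, inv_inv, mul_comm]
    -- find the dyadic scale
    have hex : ∃ k, dist (x i) (x j) < 2 ^ (k + 1) * δ := ⟨M, hM j hj⟩
    have hk0M : Nat.find hex ≤ M := Nat.find_le (hM j hj)
    have hup : dist (x i) (x j) < 2 ^ (Nat.find hex + 1) * δ := Nat.find_spec hex
    have hlow : (2:ℝ) ^ (Nat.find hex) * δ ≤ dist (x i) (x j) := by
      rcases Nat.eq_zero_or_pos (Nat.find hex) with h0 | h0
      · rw [h0]; simpa using hd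
      · obtain ⟨m, hm⟩ := Nat.exists_eq_succ_of_ne_zero h0.ne'
        have hmin := Nat.find_min hex (m := m) (by omega)
        push_neg at hmin
        rw [hm]
        simpa using hmin
    have h3 : dist (x i) (x j) ^ (-q) ≤ g j (Nat.find hex) := by
      have hpos : (0:ℝ) < (2:ℝ) ^ (Nat.find hex) * δ := by positivity
      simp only [hg, if_pos hup]
      exact Real.rpow_le_rpow_of_nonpos hpos hlow (by linarith)
    have h4 : g j (Nat.find hex) ≤ ∑ k ∈ Finset.range (M + 1), g j k :=
      Finset.single_le_sum (fun k _ => hgnn j k) (Finset.mem_range.mpr (by omega))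
    calc Φ (dist (x i) (x j) / σ) ≤ C * (σ ^ q * dist (x i) (x j) ^ (-q)) := by
          rw [← h2]; exact h1
      _ ≤ C * (σ ^ q * ∑ k ∈ Finset.range (M + 1), g j k) := by
          have hσq : (0:ℝ) ≤ σ ^ q := (Real.rpow_pos_of_pos hσ q).le
          exact mul_le_mul_of_nonneg_left
            (mul_le_mul_of_nonneg_left (h3.trans h4) hσq) hC.le
      _ = C * σ ^ q * ∑ k ∈ Finset.range (M + 1), g j k := by ring
  -- column sums
  have hcol : ∀ k, ∑ j ∈ t, g j k ≤ δ ^ (-q) * (2:ℝ) ^ (3 * (p:ℝ)) * r ^ k := by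
    intro k
    have hcard : ((t.filter fun j => dist (x i) (x j) < 2 ^ (k + 1) * δ).card : ℝ) ≤
        ((2:ℝ) ^ (k + 3)) ^ p := by
      have hsub : (t.filter fun j => dist (x i) (x j) < 2 ^ (k + 1) * δ) ⊆
          (Finset.univ.filter fun j => dist (x i) (x j) ≤ 2 ^ (k + 1) * δ) := by
        intro j hj
        simp only [Finset.mem_filter] at hj ⊢
        exact ⟨Finset.mem_univ j, hj.2.le⟩
      have h1 := pack_lemma p x hδ hsep i (r := 2 ^ (k + 1) * δ) (by positivity)
      have h2 : (2 * (2 ^ (k + 1) * δ) / δ + 1 : ℝ) = 2 ^ (k + 2) + 1 := by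
        field_simp
        ring
      have h3 : ((2:ℝ) ^ (k + 2) + 1) ^ p ≤ ((2:ℝ) ^ (k + 3)) ^ p := by
        apply pow_le_pow_left₀ (by positivity)
        have : (1:ℝ) ≤ 2 ^ (k + 2) := one_le_pow₀ (by norm_num)
        calc (2:ℝ) ^ (k + 2) + 1 ≤ 2 ^ (k + 2) + 2 ^ (k + 2) := by linarith
          _ = 2 ^ (k + 3) := by ring
      calc ((t.filter fun j => dist (x i) (x j) < 2 ^ (k + 1) * δ).card : ℝ)
          ≤ ((Finset.univ.filter fun j => dist (x i) (x j) ≤ 2 ^ (k + 1) * δ).card : ℝ) := by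
            exact_mod_cast Finset.card_le_card hsub
        _ ≤ (2 * (2 ^ (k + 1) * δ) / δ + 1) ^ p := h1
        _ = ((2:ℝ) ^ (k + 2) + 1) ^ p := by rw [h2]
        _ ≤ ((2:ℝ) ^ (k + 3)) ^ p := h3
    have hsumg : ∑ j ∈ t, g j k =
        ((2:ℝ) ^ k * δ) ^ (-q) *
          (t.filter fun j => dist (x i) (x j) < 2 ^ (k + 1) * δ).card := by
      rw [hg]
      rw [← Finset.sum_filter, Finset.sum_const, nsmul_eq_mul, mul_comm]
    -- identity for the dyadic term
    have e1 : ((2:ℝ) ^ k * δ) ^ (-q) = (2:ℝ) ^ ((k:ℝ) * (-q)) * δ ^ (-q) := by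
      rw [Real.mul_rpow (by positivity) hδ.le, ← Real.rpow_natCast (2:ℝ) k,
        ← Real.rpow_mul (by norm_num)]
    have e2 : (((2:ℝ) ^ (k + 3)) ^ p : ℝ) = (2:ℝ) ^ (((k:ℝ) + 3) * p) := by
      rw [← pow_mul, ← Real.rpow_natCast (2:ℝ) ((k + 3) * p)]
      push_cast
      ring_nf
    have e3 : r ^ k = (2:ℝ) ^ (((p:ℝ) - q) * (k:ℝ)) := by
      rw [hrdef, ← Real.rpow_natCast ((2:ℝ) ^ ((p:ℝ) - q)) k,
        ← Real.rpow_mul (by norm_num)]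
    have eq1 : ((2:ℝ) ^ k * δ) ^ (-q) * ((2:ℝ) ^ (k + 3)) ^ p =
        δ ^ (-q) * (2:ℝ) ^ (3 * (p:ℝ)) * r ^ k := by
      have merge : ∀ a b : ℝ, (2:ℝ) ^ a * (2:ℝ) ^ b = (2:ℝ) ^ (a + b) :=
        fun a b => (Real.rpow_add two_pos a b).symm
      have hexp : (k:ℝ) * (-q) + ((k:ℝ) + 3) * (p:ℝ) = 3 * (p:ℝ) + ((p:ℝ) - q) * (k:ℝ) := by
        ring
      rw [e1, e2, e3]
      calc (2:ℝ) ^ ((k:ℝ) * (-q)) * δ ^ (-q) * (2:ℝ) ^ (((k:ℝ) + 3) * (p:ℝ))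
          = δ ^ (-q) * ((2:ℝ) ^ ((k:ℝ) * (-q)) * (2:ℝ) ^ (((k:ℝ) + 3) * (p:ℝ))) := by ring
        _ = δ ^ (-q) * (2:ℝ) ^ ((k:ℝ) * (-q) + ((k:ℝ) + 3) * (p:ℝ)) := by rw [merge]
        _ = δ ^ (-q) * (2:ℝ) ^ (3 * (p:ℝ) + ((p:ℝ) - q) * (k:ℝ)) := by rw [hexp]
        _ = δ ^ (-q) * ((2:ℝ) ^ (3 * (p:ℝ)) * (2:ℝ) ^ (((p:ℝ) - q) * (k:ℝ))) := by
            rw [merge]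
        _ = δ ^ (-q) * (2:ℝ) ^ (3 * (p:ℝ)) * (2:ℝ) ^ (((p:ℝ) - q) * (k:ℝ)) := by ring
    have hpos : (0:ℝ) ≤ ((2:ℝ) ^ k * δ) ^ (-q) := by positivity
    calc ∑ j ∈ t, g j k
        = ((2:ℝ) ^ k * δ) ^ (-q) *
          (t.filter fun j => dist (x i) (x j) < 2 ^ (k + 1) * δ).card := hsumg
      _ ≤ ((2:ℝ) ^ k * δ) ^ (-q) * ((2:ℝ) ^ (k + 3)) ^ p :=
          mul_le_mul_of_nonneg_left hcard hpos
      _ = δ ^ (-q) * (2:ℝ) ^ (3 * (p:ℝ)) * r ^ k := eq1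
  -- geometric series
  have hgeom : ∑ k ∈ Finset.range (M + 1), r ^ k ≤ (1 - r)⁻¹ := by
    have hsummable : Summable fun k : ℕ => r ^ k :=
      summable_geometric_of_lt_one hr0.le hr1
    have h := Summable.sum_le_tsum (Finset.range (M + 1)) (fun k _ => pow_nonneg hr0.le k) hsummable
    rwa [tsum_geometric_of_lt_one hr0.le hr1] at h
  -- assemble
  have hCσ : (0:ℝ) ≤ C * σ ^ q := by positivity
  have hfinal : ∑ j ∈ t, Φ (dist (x i) (x j) / σ) ≤
      C * σ ^ q * (δ ^ (-q) * (2:ℝ) ^ (3 * (p:ℝ)) * (1 - r)⁻¹) := by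
    calc ∑ j ∈ t, Φ (dist (x i) (x j) / σ)
        ≤ ∑ j ∈ t, C * σ ^ q * ∑ k ∈ Finset.range (M + 1), g j k :=
          Finset.sum_le_sum key
      _ = C * σ ^ q * ∑ j ∈ t, ∑ k ∈ Finset.range (M + 1), g j k := by
          rw [Finset.mul_sum]
      _ = C * σ ^ q * ∑ k ∈ Finset.range (M + 1), ∑ j ∈ t, g j k := by
          rw [Finset.sum_comm]
      _ ≤ C * σ ^ q * ∑ k ∈ Finset.range (M + 1),
            δ ^ (-q) * (2:ℝ) ^ (3 * (p:ℝ)) * r ^ k := by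
          apply mul_le_mul_of_nonneg_left _ hCσ
          exact Finset.sum_le_sum fun k _ => hcol k
      _ = C * σ ^ q * (δ ^ (-q) * (2:ℝ) ^ (3 * (p:ℝ)) *
            ∑ k ∈ Finset.range (M + 1), r ^ k) := by
          rw [← Finset.mul_sum]
      _ ≤ C * σ ^ q * (δ ^ (-q) * (2:ℝ) ^ (3 * (p:ℝ)) * (1 - r)⁻¹) := by
          apply mul_le_mul_of_nonneg_left _ hCσ
          apply mul_le_mul_of_nonneg_left hgeom (by positivity)
  have hid : C * σ ^ q * (δ ^ (-q) * (2:ℝ) ^ (3 * (p:ℝ)) * (1 - r)⁻¹) =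
      C * (2:ℝ) ^ (3 * (p:ℝ)) * (1 - r)⁻¹ * (σ / δ) ^ q := by
    rw [Real.div_rpow hσ.le hδ.le, Real.rpow_neg hδ.le]
    field_simp
  rw [← hid]
  exact hfinal
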